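/- For the family of densities f(r;L) = (L + 2 pi r)/(L R + pi R^2) on [0,R], the Fisher information at L = L_0 is I(L_0) = (1/(L_0 + pi R)) [ (1/(2 pi R)) log(1 + 2 pi R / L_0) - 1/(L_0 + pi R) ], and I(L_0) > 0. -/

import Mathlib

open Real MeasureTheory Set intervalIntegral

lemma key_log (x : ℝ) (hx : 0 < x) : 2*x/(2+x) < Real.log (1+x) := by
  have hmono : StrictMonoOn (fun y : ℝ => Real.log (1+y) - 2*y/(2+y)) (Set.Ici 0) := by
    apply strictMonoOn_of_deriv_pos (convex_Ici 0)
    · apply ContinuousOn.sub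
      · apply ContinuousOn.log (by fun_prop)
        intro y hy
        simp only [mem_Ici] at hy
        positivity
      · apply ContinuousOn.div (by fun_prop) (by fun_prop)
        intro y hy
        simp only [mem_Ici] at hy
        positivity
    · intro y hy
      rw [interior_Ici] at hy
      have hy0 : (0:ℝ) < y := hy
      have h1 : HasDerivAt (fun z : ℝ => Real.log (1+z)) (1/(1+y)) y := by
        have := ((hasDerivAt_id y).const_add 1).log (by positivity : (1:ℝ)+y ≠ 0)
        simpa using this
      have h2 : HasDerivAt (fun z : ℝ => 2*z/(2+z))
          ((2*1*(2+y) - 2*y*1)/(2+y)^2) y :=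
        ((hasDerivAt_id y).const_mul 2).div ((hasDerivAt_id y).const_add 2)
          (by positivity)
      have h3 := h1.sub h2
      rw [show (fun y : ℝ => Real.log (1+y) - 2*y/(2+y)) = (fun z : ℝ => Real.log (1+z)) - (fun z : ℝ => 2*z/(2+z)) from rfl, h3.deriv]
      have heq : 1/(1+y) - (2*1*(2+y) - 2*y*1)/(2+y)^2 = y^2/((1+y)*(2+y)^2) := by
        field_simp
        ring
      rw [heq]
      positivity
  have h0 : (0:ℝ) ∈ Set.Ici (0:ℝ) := Set.self_mem_Ici
  have hxm : x ∈ Set.Ici (0:ℝ) := hx.le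
  have h := hmono h0 hxm hx
  norm_num at h
  linarith

/-- For the family f(r;L) = (L + 2πr)/(LR + πR²) on [0,R], the Fisher information
at L₀ is I(L₀) = (1/(L₀+πR))[(1/(2πR)) log(1 + 2πR/L₀) - 1/(L₀+πR)], and I(L₀) > 0. -/
theorem stmt_8 (R L0 : ℝ) (hR : 0 < R) (hL0 : 0 < L0)
    (f : ℝ → ℝ → ℝ)
    (hf : ∀ r L, f r L = (L + 2 * π * r) / (L * R + π * R ^ 2))
    (I : ℝ)
    (hI : I = ∫ r in (0:ℝ)..R,
        (deriv (fun L => Real.log (f r L)) L0) ^ 2 * f r L0) :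
    I = (1 / (L0 + π * R))
        * ((1 / (2 * π * R)) * Real.log (1 + 2 * π * R / L0) - 1 / (L0 + π * R))
    ∧ 0 < I := by
  have hπ : (0:ℝ) < π := Real.pi_pos
  set c := L0 + π * R with hc
  have hcpos : 0 < c := by positivity
  have hIcc : uIcc (0:ℝ) R = Icc 0 R := uIcc_of_le hR.le
  set G : ℝ → ℝ := fun r => ((π*R - 2*π*r)/(c*(L0+2*π*r)))^2 * ((L0+2*π*r)/(R*c))
    with hGdef
  have hderivlog : ∀ r : ℝ, 0 ≤ r →
      deriv (fun L => Real.log (f r L)) L0 = (π*R - 2*π*r)/(c*(L0+2*π*r)) := by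
    intro r hr
    have hnum : 0 < L0 + 2*π*r := by positivity
    have hden : 0 < L0*R + π*R^2 := by positivity
    have hfun : (fun L => Real.log (f r L))
        = fun L => Real.log ((L + 2*π*r)/(L*R + π*R^2)) := by
      funext L; rw [hf r L]
    have hd : HasDerivAt (fun L : ℝ => (L + 2*π*r)/(L*R + π*R^2))
        ((1*(L0*R + π*R^2) - (L0 + 2*π*r)*(1*R))/(L0*R + π*R^2)^2) L0 := by
      have h1 : HasDerivAt (fun L : ℝ => L + 2*π*r) 1 L0 :=
        (hasDerivAt_id L0).add_const _
      have h2 : HasDerivAt (fun L : ℝ => L*R + π*R^2) (1*R) L0 :=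
        ((hasDerivAt_id L0).mul_const R).add_const _
      exact h1.div h2 hden.ne'
    have hfval : (L0 + 2*π*r)/(L0*R + π*R^2) ≠ 0 := by positivity
    have hdl := hd.log hfval
    rw [hfun, hdl.deriv]
    have hRc : L0*R + π*R^2 = R*c := by rw [hc]; ring
    field_simp
    ring
  have hcongr : EqOn (fun r => (deriv (fun L => Real.log (f r L)) L0)^2 * f r L0)
      G (uIcc (0:ℝ) R) := by
    intro r hr
    rw [hIcc] at hr
    simp only [hGdef]
    rw [hderivlog r hr.1, hf r L0]
    have hRc : L0*R + π*R^2 = R*c := by rw [hc]; ring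
    rw [hRc]
  set F : ℝ → ℝ := fun r =>
    (1/(R*c)) * ((1/(2*π)) * Real.log (L0+2*π*r) - 2*r/c + (L0*r + π*r^2)/c^2)
    with hF
  have hFderiv : ∀ r ∈ uIcc (0:ℝ) R, HasDerivAt F (G r) r := by
    intro r hr
    rw [hIcc] at hr
    have hr0 : 0 ≤ r := hr.1
    have hnum : 0 < L0 + 2*π*r := by positivity
    have hlog : HasDerivAt (fun s : ℝ => Real.log (L0+2*π*s)) ((2*π)/(L0+2*π*r)) r := by
      have h1 : HasDerivAt (fun s : ℝ => L0 + 2*π*s) (2*π) r := by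
        simpa using ((hasDerivAt_id r).const_mul (2*π)).const_add L0
      simpa using h1.log hnum.ne'
    have h2 : HasDerivAt (fun s : ℝ => 2*s/c) (2/c) r := by
      have := ((hasDerivAt_id r).const_mul 2).div_const c
      simpa using this
    have h3 : HasDerivAt (fun s : ℝ => (L0*s + π*s^2)/c^2) ((L0 + π*(2*r))/c^2) r := by
      have ha : HasDerivAt (fun s : ℝ => L0*s) L0 r := by
        simpa using (hasDerivAt_id r).const_mul L0
      have hb : HasDerivAt (fun s : ℝ => π*s^2) (π*(2*r)) r := by
        have := (hasDerivAt_pow 2 r).const_mul π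
        simpa using this
      exact (ha.add hb).div_const _
    have hcomb := (((hlog.const_mul (1/(2*π))).sub h2).add h3).const_mul (1/(R*c))
    refine hcomb.congr_deriv ?_
    simp only [hGdef]
    field_simp
    ring
  have hGint : IntervalIntegrable G volume 0 R := by
    apply ContinuousOn.intervalIntegrable
    apply ContinuousOn.mul
    · apply ContinuousOn.pow
      apply ContinuousOn.div (by fun_prop) (by fun_prop)
      intro y hy
      rw [hIcc] at hy
      have hy0 : 0 ≤ y := hy.1
      positivity
    · apply ContinuousOn.div (by fun_prop) (by fun_prop)
      intro y hy
      rw [hIcc] at hy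
      have hy0 : 0 ≤ y := hy.1
      positivity
  have hI2 : I = F R - F 0 := by
    rw [hI, intervalIntegral.integral_congr hcongr]
    exact intervalIntegral.integral_eq_sub_of_hasDerivAt hFderiv hGint
  have hlogeq : Real.log (1 + 2*π*R/L0) = Real.log (L0 + 2*π*R) - Real.log L0 := by
    rw [show (1 + 2*π*R/L0) = (L0 + 2*π*R)/L0 by field_simp]
    rw [Real.log_div (by positivity) hL0.ne']
  have hval : I = (1/c) * ((1/(2*π*R)) * Real.log (1 + 2*π*R/L0) - 1/c) := by
    rw [hI2, hlogeq, hF]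
    simp only
    norm_num
    field_simp
    ring
  refine ⟨hval, ?_⟩
  rw [hval]
  have hx : 0 < 2*π*R/L0 := by positivity
  have hkey := key_log _ hx
  have h2eq : 2*(2*π*R/L0)/(2+2*π*R/L0) = 2*π*R/c := by
    rw [hc]; field_simp
  have hgt : 2*π*R/c < Real.log (1 + 2*π*R/L0) := by rw [← h2eq]; exact hkey
  have hmul := mul_lt_mul_of_pos_left hgt (by positivity : (0:ℝ) < 1/(2*π*R))
  have heq2 : (1/(2*π*R)) * (2*π*R/c) = 1/c := by field_simp
  rw [heq2] at hmul
  have : 0 < (1/(2*π*R)) * Real.log (1 + 2*π*R/L0) - 1/c := by linarith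
  exact mul_pos (by positivity) this
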